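/- Let n ≥ 0 be an integer and ε ∈ ℝ. For every complex z with |z−1| < 1, the series Σ_{m≥0} P_n^{(m)}(ε) (z−1)^m converges and equals (1 − ε/z²)^n; that is, the Taylor coefficients at z = 1 of z ↦ (1 − ε/z²)^n are exactly the P_n^{(m)}(ε), m ≥ 0. -/

import Mathlib

open scoped BigOperators

/-- Pochhammer symbol `(a)_k = a(a+1)⋯(a+k-1)` over ℝ. -/
noncomputable def pochR (a : ℝ) (k : ℕ) : ℝ := ∏ i ∈ Finset.range k, (a + i)

/-- The polynomials `P_n^{(m)}(ε) = ((-1)^m/m!) Σ_{k=0}^n C(n,k) (-ε)^k (2k)_m`. -/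
noncomputable def Ppoly (n m : ℕ) (ε : ℝ) : ℝ :=
  ((-1 : ℝ) ^ m / (m.factorial : ℝ)) * ∑ k ∈ Finset.range (n + 1),
    (n.choose k : ℝ) * (-ε) ^ k * pochR (2 * k) m

lemma pochR_nat_cast (a m : ℕ) : pochR (a : ℝ) m = (a.ascFactorial m : ℝ) := by
  induction m with
  | zero => simp [pochR]
  | succ m ih =>
      rw [pochR, Finset.prod_range_succ, ← pochR, ih, Nat.ascFactorial_succ]
      push_cast
      ring

lemma pochR_zero_eval (m : ℕ) (hm : m ≠ 0) : pochR (0 : ℝ) m = 0 := by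
  rw [show (0:ℝ) = ((0:ℕ):ℝ) by norm_num, pochR_nat_cast]
  cases m with
  | zero => exact absurd rfl hm
  | succ m => simp [Nat.zero_ascFactorial]

theorem stmt8 (n : ℕ) (ε : ℝ) (z : ℂ) (hz : ‖z - 1‖ < 1) :
    HasSum (fun m : ℕ => ((Ppoly n m ε : ℝ) : ℂ) * (z - 1) ^ m)
      ((1 - (ε : ℂ) / z ^ 2) ^ n) := by
  have hz0 : z ≠ 0 := by
    intro h
    rw [h] at hz
    simp at hz
  have hr : ‖(1 - z : ℂ)‖ < 1 := by
    rw [show (1 - z : ℂ) = -(z - 1) by ring, norm_neg]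
    exact hz
  -- per-k series
  have key : ∀ k ∈ Finset.range (n + 1),
      HasSum (fun m : ℕ => ((n.choose k : ℂ) * (-ε : ℂ) ^ k) *
        (((-1 : ℝ) ^ m / (m.factorial : ℝ) * pochR (2 * k) m : ℝ) : ℂ) * (z - 1) ^ m)
        ((n.choose k : ℂ) * (-ε : ℂ) ^ k * (1 / z ^ 2) ^ k) := by
    intro k _
    rcases Nat.eq_zero_or_pos k with hk | hk
    · subst hk
      simp only [pow_zero, mul_one]
      have : HasSum (fun m : ℕ => ((n.choose 0 : ℂ) * 1) *
          (((-1 : ℝ) ^ m / (m.factorial : ℝ) * pochR (2 * 0) m : ℝ) : ℂ) * (z - 1) ^ m)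
          (((n.choose 0 : ℂ) * 1) *
          (((-1 : ℝ) ^ 0 / ((0:ℕ).factorial : ℝ) * pochR (2 * 0) 0 : ℝ) : ℂ) * (z - 1) ^ 0) := by
        apply hasSum_single (0 : ℕ)
        intro m hm
        simp [pochR_zero_eval m hm]
      simpa [pochR, mul_one] using this
    · have base := hasSum_choose_mul_geometric_of_norm_lt_one (2 * k - 1) hr
      have hsum := base.mul_left ((n.choose k : ℂ) * (-ε : ℂ) ^ k)
      have heq : ∀ m : ℕ, ((n.choose k : ℂ) * (-ε : ℂ) ^ k) *
          (((m + (2 * k - 1)).choose (2 * k - 1) : ℂ) * (1 - z) ^ m) =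
          ((n.choose k : ℂ) * (-ε : ℂ) ^ k) *
          (((-1 : ℝ) ^ m / (m.factorial : ℝ) * pochR (2 * k) m : ℝ) : ℂ) * (z - 1) ^ m := by
        intro m
        have hK : 2 * k = (2 * k - 1) + 1 := by omega
        have hcast : (2 * (k : ℝ)) = (((2 * k - 1) + 1 : ℕ) : ℝ) := by
          rw [← hK]; push_cast; ring
        have hp : pochR (2 * (k : ℝ)) m
            = (m.factorial : ℝ) * ((m + (2 * k - 1)).choose (2 * k - 1) : ℝ) := by
          rw [hcast, pochR_nat_cast, Nat.ascFactorial_eq_factorial_mul_choose,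
            Nat.add_comm (2 * k - 1) m, Nat.choose_symm_add]
          push_cast; ring
        have hfac : (m.factorial : ℂ) ≠ 0 := by exact_mod_cast m.factorial_ne_zero
        have hw : ((1 : ℂ) - z) ^ m = (-1 : ℂ) ^ m * (z - 1) ^ m := by
          rw [← neg_pow]; ring_nf
        push_cast [hp, hw]
        field_simp
      rw [show (1 : ℂ) - (1 - z) = z by ring] at hsum
      have hpow : (1 : ℂ) / z ^ ((2 * k - 1) + 1) = (1 / z ^ 2) ^ k := by
        rw [show (2 * k - 1) + 1 = 2 * k by omega, div_pow, one_pow, pow_mul]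
      rw [hpow] at hsum
      have hfun : (fun m : ℕ => ((n.choose k : ℂ) * (-ε : ℂ) ^ k) *
          (((m + (2 * k - 1)).choose (2 * k - 1) : ℂ) * (1 - z) ^ m)) =
          fun m : ℕ => ((n.choose k : ℂ) * (-ε : ℂ) ^ k) *
          (((-1 : ℝ) ^ m / (m.factorial : ℝ) * pochR (2 * k) m : ℝ) : ℂ) * (z - 1) ^ m :=
        funext heq
      rw [hfun] at hsum
      exact hsum
  have total := hasSum_sum key
  have hfun2 : (fun m : ℕ => ∑ k ∈ Finset.range (n + 1),
      ((n.choose k : ℂ) * (-ε : ℂ) ^ k) *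
        (((-1 : ℝ) ^ m / (m.factorial : ℝ) * pochR (2 * k) m : ℝ) : ℂ) * (z - 1) ^ m) =
      fun m : ℕ => ((Ppoly n m ε : ℝ) : ℂ) * (z - 1) ^ m := by
    funext m
    simp only [Ppoly]
    push_cast
    rw [Finset.mul_sum, Finset.sum_mul]
    apply Finset.sum_congr rfl
    intro k _
    ring
  rw [hfun2] at total
  have hval : ∑ k ∈ Finset.range (n + 1),
      (n.choose k : ℂ) * (-ε : ℂ) ^ k * (1 / z ^ 2) ^ k = (1 - (ε : ℂ) / z ^ 2) ^ n := by
    rw [show (1 : ℂ) - (ε : ℂ) / z ^ 2 = (-(ε : ℂ) / z ^ 2) + 1 by ring, add_pow]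
    apply Finset.sum_congr rfl
    intro k _
    rw [one_pow, mul_one, div_pow, neg_pow, div_pow, one_pow]
    ring
  rwa [hval] at total
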